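/- Let n ≥ 2, let Ω_m and Ω be open bounded subsets of ℝⁿ with the closure of Ω_m contained in Ω, and set Ω_b = Ω \ closure(Ω_m). Let σ_i, σ_e > 0 and c ∈ ℝ, and let u : ℝⁿ → ℝ be twice continuously differentiable with compact support contained in Ω_m. Define u_e := u on Ω_m, u_i := −(σ_e/σ_i) u + c on Ω_m, and u_b := 0 on Ω_b. Then: (i) σ_i Δu_i + σ_e Δu_e = 0 at every point of Ω_m (so Δ_i u_i + Δ_e u_e = 0 with Δ_i = −σ_i Δ, Δ_e = −σ_e Δ); (ii) Δu_b = 0 on Ω_b and u_b together with all its derivatives vanishes on ∂Ω; (iii) u_e and its gradient ∇u_e vanish on a neighborhood of ∂Ω_m, u_i = c and ∇u_i = 0 on a neighborhood of ∂Ω_m. Consequently the triple (u_i, u_e, u_b) satisfies all the equations of the homogeneous steady bidomain transmission problem: the transmission conditions u_e = u_b, σ_e ∂u_e/∂ν_i = −σ_b ∂u_b/∂ν_e and σ_i ∂u_i/∂ν_i = 0 on ∂Ω_m, and u_b = 0, ∂u_b/∂ν_e = 0 on ∂Ω. -/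
import Mathlib


/-- Partial derivative in the `i`-th coordinate direction, via the derivative of the
coordinate slice (equal to the classical partial derivative whenever it exists). -/
noncomputable def pderiv' {n : ℕ} (i : Fin n) (f : (Fin n → ℝ) → ℝ)
    (x : Fin n → ℝ) : ℝ :=
  deriv (fun t : ℝ => f (Function.update x i t)) (x i)

/-- The standard Laplacian Δu = ∑_p ∂²u/∂x_p². -/
noncomputable def Lap {n : ℕ} (u : (Fin n → ℝ) → ℝ) (x : Fin n → ℝ) : ℝ :=
  ∑ p, pderiv' p (fun y => pderiv' p u y) x

lemma pderiv'_zero {n : ℕ} (i : Fin n) (x : Fin n → ℝ) :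
    pderiv' i (fun _ : Fin n → ℝ => (0 : ℝ)) x = 0 := by
  simp [pderiv']

lemma pderiv'_smul_add {n : ℕ} (i : Fin n) (a c : ℝ) (f : (Fin n → ℝ) → ℝ)
    (x : Fin n → ℝ) :
    pderiv' i (fun y => a * f y + c) x = a * pderiv' i f x := by
  simp only [pderiv']
  rw [show (fun t : ℝ => a * f (Function.update x i t) + c)
      = fun t : ℝ => (a * f (Function.update x i t)) + c from rfl,
    deriv_add_const, deriv_const_mul_field]

lemma pderiv'_of_nmem_tsupport {n : ℕ} (i : Fin n) (f : (Fin n → ℝ) → ℝ)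
    (x : Fin n → ℝ) (hx : x ∉ tsupport f) : pderiv' i f x = 0 := by
  have hopen : IsOpen (tsupport f)ᶜ := (isClosed_tsupport f).isOpen_compl
  have hcont : Continuous fun t : ℝ => Function.update x i t := by
    fun_prop
  have hmem : (x i) ∈ (fun t : ℝ => Function.update x i t) ⁻¹' (tsupport f)ᶜ := by
    simp [Function.update_eq_self, hx]
  have hev : (fun t : ℝ => f (Function.update x i t)) =ᶠ[nhds (x i)]
      (fun _ => (0 : ℝ)) := by
    filter_upwards [(hopen.preimage hcont).mem_nhds hmem] with t ht
    exact image_eq_zero_of_notMem_tsupport ht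
  unfold pderiv'
  rw [hev.deriv_eq]
  simp

/-- for u ∈ C² compactly supported in Ω_m, σ_i, σ_e > 0 and c ∈ ℝ, the
triple u_e = u, u_i = −(σ_e/σ_i)u + c, u_b = 0 lies in the null-space of the homogeneous
steady bidomain transmission problem: (i) σ_i Δu_i + σ_e Δu_e = 0 in Ω_m; (ii) Δu_b = 0
in Ω_b and u_b vanishes with all its derivatives on ∂Ω; (iii) u_e, ∇u_e vanish and
u_i = c, ∇u_i = 0 on a neighborhood of ∂Ω_m; consequently the transmission conditions
u_e = u_b, σ_e ∂u_e/∂ν = −σ_b ∂u_b/∂ν, σ_i ∂u_i/∂ν = 0 on ∂Ω_m and u_b = 0,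
σ_b ∂u_b/∂ν = 0 on ∂Ω all hold. -/
theorem bidomain_nullspace_triple (n : ℕ) (hn : 2 ≤ n)
    (Ωm Ω : Set (Fin n → ℝ)) (hΩm : IsOpen Ωm) (hΩ : IsOpen Ω)
    (hbm : Bornology.IsBounded Ωm) (hb : Bornology.IsBounded Ω)
    (hsub : closure Ωm ⊆ Ω)
    (Ωb : Set (Fin n → ℝ)) (hΩb : Ωb = Ω \ closure Ωm)
    (σi σe σb : ℝ) (hσi : 0 < σi) (hσe : 0 < σe) (hσb : 0 < σb) (c : ℝ)
    (u : (Fin n → ℝ) → ℝ) (hu : ContDiff ℝ 2 u) (hucompact : HasCompactSupport u)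
    (husupp : tsupport u ⊆ Ωm)
    (ue ui ub : (Fin n → ℝ) → ℝ)
    (hue : ue = u) (hui : ui = fun x => -(σe / σi) * u x + c) (hub : ub = 0) :
    (∀ x ∈ Ωm, σi * Lap ui x + σe * Lap ue x = 0) ∧
    (∀ x ∈ Ωb, Lap ub x = 0) ∧
    (∀ k : ℕ, ∀ x ∈ frontier Ω, iteratedFDeriv ℝ k ub x = 0) ∧
    (∃ U : Set (Fin n → ℝ), IsOpen U ∧ frontier Ωm ⊆ U ∧
      ∀ x ∈ U, ue x = 0 ∧ (∀ m, pderiv' m ue x = 0) ∧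
        ui x = c ∧ (∀ m, pderiv' m ui x = 0)) ∧
    (∀ x ∈ frontier Ωm, ue x = ub x) ∧
    (∀ x ∈ frontier Ωm, ∀ m, σe * pderiv' m ue x = -(σb * pderiv' m ub x)) ∧
    (∀ x ∈ frontier Ωm, ∀ m, σi * pderiv' m ui x = 0) ∧
    (∀ x ∈ frontier Ω, ub x = 0 ∧ ∀ m, σb * pderiv' m ub x = 0) := by
  subst hue hui hub
  -- pderiv' of ui is scalar multiple of pderiv' of u, everywhere
  have hpi : ∀ (m : Fin n) (x : Fin n → ℝ),
      pderiv' m (fun y => -(σe / σi) * ue y + c) x = -(σe / σi) * pderiv' m ue x :=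
    fun m x => pderiv'_smul_add m _ c ue x
  have hLap : ∀ x, Lap (fun y => -(σe / σi) * ue y + c) x = -(σe / σi) * Lap ue x := by
    intro x
    unfold Lap
    rw [Finset.mul_sum]
    refine Finset.sum_congr rfl fun p _ => ?_
    have : (fun y => pderiv' p (fun y => -(σe / σi) * ue y + c) y)
        = fun y => -(σe / σi) * pderiv' p ue y + 0 := by
      funext y; rw [hpi p y]; ring
    rw [this, pderiv'_smul_add]
  have hub0 : ∀ (m : Fin n) (x : Fin n → ℝ),
      pderiv' m (0 : (Fin n → ℝ) → ℝ) x = 0 := fun m x => pderiv'_zero m x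
  -- frontier Ωm is disjoint from tsupport ue
  have hfront : ∀ x ∈ frontier Ωm, x ∉ tsupport ue := by
    intro x hx hxs
    exact (hΩm.frontier_eq ▸ hx).2 (interior_eq_iff_isOpen.mpr hΩm ▸ husupp hxs)
  refine ⟨?_, ?_, ?_, ?_, ?_, ?_, ?_, ?_⟩
  · intro x _
    rw [hLap x]
    field_simp
    ring
  · intro x _
    unfold Lap
    refine Finset.sum_eq_zero fun p _ => ?_
    have : (fun y => pderiv' p (0 : (Fin n → ℝ) → ℝ) y)
        = fun _ : Fin n → ℝ => (0 : ℝ) := by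
      funext y; exact pderiv'_zero p y
    rw [this]; exact pderiv'_zero p x
  · intro k x _
    have : (0 : (Fin n → ℝ) → ℝ) = fun _ => (0 : ℝ) := rfl
    rw [this, iteratedFDeriv_zero_fun]; rfl
  · refine ⟨(tsupport ue)ᶜ, (isClosed_tsupport ue).isOpen_compl, ?_, ?_⟩
    · intro x hx; exact hfront x hx
    · intro x hx
      have hu0 : ue x = 0 := image_eq_zero_of_notMem_tsupport hx
      refine ⟨hu0, fun m => pderiv'_of_nmem_tsupport m ue x hx, ?_, fun m => ?_⟩
      · simp [hu0]
      · rw [hpi m x, pderiv'_of_nmem_tsupport m ue x hx, mul_zero]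
  · intro x hx
    simp [image_eq_zero_of_notMem_tsupport (hfront x hx)]
  · intro x hx m
    rw [pderiv'_of_nmem_tsupport m ue x (hfront x hx), hub0 m x]
    ring
  · intro x hx m
    rw [hpi m x, pderiv'_of_nmem_tsupport m ue x (hfront x hx)]
    ring
  · intro x _
    exact ⟨rfl, fun m => by rw [hub0 m x]; ring⟩
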